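/- The Laguerre functions 𝓛_n(x) = L_n(x) e^{-x/2}, n ∈ ℕ, form an orthonormal family in L²(0,∞): ∫_0^∞ 𝓛_n(x) 𝓛_m(x) dx = δ_{nm}. -/

import Mathlib

open MeasureTheory

/-- The n-th Laguerre polynomial. -/
noncomputable def laguerre (n : ℕ) (x : ℝ) : ℝ :=
  ∑ k ∈ Finset.range (n + 1), (n.choose k : ℝ) * (-x) ^ k / (Nat.factorial k : ℝ)

/-- The n-th Laguerre function `𝓛_n(x) = L_n(x) e^{-x/2}`. -/
noncomputable def lagFun (n : ℕ) (x : ℝ) : ℝ := laguerre n x * Real.exp (-x / 2)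

/- Auxiliary combinatorial lemmas -/

lemma lag_aux_B (n t : ℕ) :
    ∑ k ∈ Finset.range (n + 1), (-1 : ℤ) ^ k * n.choose k * k.choose t
      = if t = n then (-1) ^ n else 0 := by
  rcases le_or_gt t n with h | h
  · rw [Finset.range_eq_Ico, ← Finset.sum_Ico_consecutive _ (Nat.zero_le t)
      (by omega : t ≤ n + 1)]
    have h1 : ∑ k ∈ Finset.Ico 0 t, (-1 : ℤ) ^ k * n.choose k * k.choose t = 0 := by
      refine Finset.sum_eq_zero fun k hk => ?_
      simp [Nat.choose_eq_zero_of_lt (Finset.mem_Ico.mp hk).2]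
    rw [h1, zero_add, Finset.sum_Ico_eq_sum_range]
    have h2 : ∀ j ∈ Finset.range (n + 1 - t),
        (-1 : ℤ) ^ (t + j) * n.choose (t + j) * (t + j).choose t
          = ((-1) ^ t * n.choose t) * ((-1) ^ j * (n - t).choose j) := by
      intro j hj
      have hj' : t + j ≤ n := by have := Finset.mem_range.mp hj; omega
      have hc := Nat.choose_mul (n := n) (Nat.le_add_right t j)
      rw [Nat.add_sub_cancel_left] at hc
      have hc' : ((n.choose (t + j) : ℤ) * (t + j).choose t)
          = (n.choose t : ℤ) * (n - t).choose j := by exact_mod_cast hc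
      rw [pow_add]
      calc (-1 : ℤ) ^ t * (-1) ^ j * n.choose (t + j) * (t + j).choose t
          = (-1 : ℤ) ^ t * (-1) ^ j * ((n.choose (t + j) : ℤ) * (t + j).choose t) := by ring
        _ = (-1 : ℤ) ^ t * (-1) ^ j * ((n.choose t : ℤ) * (n - t).choose j) := by rw [hc']
        _ = ((-1) ^ t * n.choose t) * ((-1) ^ j * (n - t).choose j) := by ring
    rw [Finset.sum_congr rfl h2, ← Finset.mul_sum,
      (by omega : n + 1 - t = (n - t) + 1), Int.alternating_sum_range_choose]
    rcases eq_or_ne t n with rfl | hne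
    · simp
    · rw [if_neg (by omega), if_neg hne, mul_zero]
  · rw [if_neg (by omega)]
    refine Finset.sum_eq_zero fun k hk => ?_
    have : k < t := by have := Finset.mem_range.mp hk; omega
    simp [Nat.choose_eq_zero_of_lt this]

lemma lag_aux_A (m k : ℕ) :
    ∑ l ∈ Finset.range (m + 1), (-1 : ℤ) ^ l * m.choose l * (k + l).choose k
      = (-1) ^ m * k.choose m := by
  have hV : ∀ l, ((k + l).choose k : ℤ)
      = ∑ i ∈ Finset.range (k + 1), (k.choose i : ℤ) * l.choose (k - i) := by
    intro l
    have h := Nat.add_choose_eq k l k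
    rw [Finset.Nat.sum_antidiagonal_eq_sum_range_succ_mk] at h
    exact_mod_cast h
  calc ∑ l ∈ Finset.range (m + 1), (-1 : ℤ) ^ l * m.choose l * (k + l).choose k
      = ∑ l ∈ Finset.range (m + 1), ∑ i ∈ Finset.range (k + 1),
          (k.choose i : ℤ) * ((-1) ^ l * m.choose l * l.choose (k - i)) := by
        refine Finset.sum_congr rfl fun l _ => ?_
        rw [hV l, Finset.mul_sum]
        exact Finset.sum_congr rfl fun i _ => by ring
    _ = ∑ i ∈ Finset.range (k + 1), (k.choose i : ℤ) *
          (∑ l ∈ Finset.range (m + 1), (-1 : ℤ) ^ l * m.choose l * l.choose (k - i)) := by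
        rw [Finset.sum_comm]
        exact Finset.sum_congr rfl fun i _ => (Finset.mul_sum _ _ _).symm
    _ = ∑ i ∈ Finset.range (k + 1), (k.choose i : ℤ) *
          (if k - i = m then (-1 : ℤ) ^ m else 0) := by
        exact Finset.sum_congr rfl fun i _ => by rw [lag_aux_B m (k - i)]
    _ = (-1) ^ m * k.choose m := by
        rcases le_or_gt m k with h | h
        · rw [Finset.sum_eq_single_of_mem (k - m)
            (Finset.mem_range.mpr (by omega))]
          · rw [if_pos (by omega), Nat.choose_symm h]; ring
          · intro i hi hne
            rw [if_neg (fun hh => hne (by have := Finset.mem_range.mp hi; omega)), mul_zero]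
        · rw [Finset.sum_eq_zero, Nat.choose_eq_zero_of_lt h]
          · simp
          · intro i hi
            rw [if_neg (by have := Finset.mem_range.mp hi; omega), mul_zero]

lemma lag_aux_C (n m : ℕ) :
    ∑ k ∈ Finset.range (n + 1), ∑ l ∈ Finset.range (m + 1),
        (-1 : ℤ) ^ (k + l) * n.choose k * m.choose l * (k + l).choose k
      = if n = m then 1 else 0 := by
  have h1 : ∀ k, ∑ l ∈ Finset.range (m + 1),
      (-1 : ℤ) ^ (k + l) * n.choose k * m.choose l * (k + l).choose k
        = ((-1) ^ k * n.choose k) * ((-1) ^ m * k.choose m) := by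
    intro k
    rw [← lag_aux_A m k, Finset.mul_sum]
    exact Finset.sum_congr rfl fun l _ => by rw [pow_add]; ring
  rw [Finset.sum_congr rfl fun k _ => h1 k]
  have : ∑ k ∈ Finset.range (n + 1), ((-1 : ℤ) ^ k * n.choose k) * ((-1) ^ m * k.choose m)
      = (-1) ^ m * ∑ k ∈ Finset.range (n + 1), (-1 : ℤ) ^ k * n.choose k * k.choose m := by
    rw [Finset.mul_sum]; exact Finset.sum_congr rfl fun k _ => by ring
  rw [this, lag_aux_B n m]
  rcases eq_or_ne n m with rfl | hne
  · rw [if_pos rfl, if_pos rfl, ← pow_add]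
    simp [pow_mul, ← two_mul]
  · rw [if_neg (fun h => hne h.symm), if_neg hne, mul_zero]

/- Analytic lemmas -/

lemma lag_moment (p : ℕ) :
    ∫ x in Set.Ioi (0 : ℝ), x ^ p * Real.exp (-x) = p.factorial := by
  have h0 : (0 : ℝ) < (p : ℝ) + 1 := by positivity
  have h := Real.Gamma_eq_integral h0
  rw [Real.Gamma_nat_eq_factorial] at h
  rw [h]
  refine setIntegral_congr_fun measurableSet_Ioi fun x hx => ?_
  have hx' : (0 : ℝ) < x := hx
  rw [add_sub_cancel_right]; beta_reduce; rw [Real.rpow_natCast]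
  ring

lemma lag_integrable (p : ℕ) :
    IntegrableOn (fun x : ℝ => x ^ p * Real.exp (-x)) (Set.Ioi 0) := by
  have h := Real.GammaIntegral_convergent (s := (p : ℝ) + 1) (by positivity)
  refine h.congr_fun (fun x hx => ?_) measurableSet_Ioi
  have hx' : (0 : ℝ) < x := hx
  rw [add_sub_cancel_right]; beta_reduce; rw [Real.rpow_natCast]
  ring

/-- the Laguerre functions form an orthonormal family in `L²(0,∞)`:
`∫_0^∞ 𝓛_n 𝓛_m = δ_{nm}`. -/
theorem lagFun_orthonormal (n m : ℕ) :
    ∫ x in Set.Ioi (0 : ℝ), lagFun n x * lagFun m x = if n = m then 1 else 0 := by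
  have key : ∀ x : ℝ, lagFun n x * lagFun m x =
      ∑ k ∈ Finset.range (n + 1), ∑ l ∈ Finset.range (m + 1),
        ((-1 : ℝ) ^ (k + l) * n.choose k * m.choose l /
          (k.factorial * l.factorial)) * (x ^ (k + l) * Real.exp (-x)) := by
    intro x
    have hexp : Real.exp (-x / 2) * Real.exp (-x / 2) = Real.exp (-x) := by
      rw [← Real.exp_add]; ring_nf
    unfold lagFun laguerre
    rw [show (∑ k ∈ Finset.range (n + 1), (n.choose k : ℝ) * (-x) ^ k / k.factorial)
          * Real.exp (-x / 2)
        * ((∑ l ∈ Finset.range (m + 1), (m.choose l : ℝ) * (-x) ^ l / l.factorial)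
          * Real.exp (-x / 2))
      = (∑ k ∈ Finset.range (n + 1), (n.choose k : ℝ) * (-x) ^ k / k.factorial)
        * (∑ l ∈ Finset.range (m + 1), (m.choose l : ℝ) * (-x) ^ l / l.factorial)
        * (Real.exp (-x / 2) * Real.exp (-x / 2)) by ring, hexp,
      Finset.sum_mul_sum, Finset.sum_mul]
    refine Finset.sum_congr rfl fun k _ => ?_
    rw [Finset.sum_mul]
    refine Finset.sum_congr rfl fun l _ => ?_
    rw [pow_add, neg_pow x k, neg_pow x l, pow_add]
    ring
  rw [setIntegral_congr_fun measurableSet_Ioi (fun x _ => key x)]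
  have hint : ∀ (c : ℝ) (p : ℕ),
      IntegrableOn (fun x : ℝ => c * (x ^ p * Real.exp (-x))) (Set.Ioi 0) :=
    fun c p => (lag_integrable p).const_mul c
  rw [integral_finset_sum _ (fun k _ =>
    integrable_finset_sum _ (fun l _ => hint _ _))]
  have h2 : ∀ k ∈ Finset.range (n + 1),
      (∫ x in Set.Ioi (0 : ℝ), ∑ l ∈ Finset.range (m + 1),
        ((-1 : ℝ) ^ (k + l) * n.choose k * m.choose l /
          (k.factorial * l.factorial)) * (x ^ (k + l) * Real.exp (-x)))
      = ∑ l ∈ Finset.range (m + 1),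
          (((-1 : ℤ) ^ (k + l) * n.choose k * m.choose l * (k + l).choose k : ℤ) : ℝ) := by
    intro k _
    rw [integral_finset_sum _ (fun l _ => hint _ _)]
    refine Finset.sum_congr rfl fun l _ => ?_
    rw [integral_const_mul, lag_moment (k + l)]
    have hf := Nat.add_choose_mul_factorial_mul_factorial k l
    have hf' : ((k + l).factorial : ℝ)
        = ((k + l).choose k : ℝ) * k.factorial * l.factorial := by
      rw [Nat.choose_symm_add]; exact_mod_cast hf.symm
    rw [hf']
    have hk : (k.factorial : ℝ) ≠ 0 := Nat.cast_ne_zero.mpr k.factorial_ne_zero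
    have hl : (l.factorial : ℝ) ≠ 0 := Nat.cast_ne_zero.mpr l.factorial_ne_zero
    push_cast
    field_simp
  rw [Finset.sum_congr rfl h2]
  have hcast : (((∑ k ∈ Finset.range (n + 1), ∑ l ∈ Finset.range (m + 1),
      (-1 : ℤ) ^ (k + l) * n.choose k * m.choose l * (k + l).choose k) : ℤ) : ℝ)
      = ∑ k ∈ Finset.range (n + 1), ∑ l ∈ Finset.range (m + 1),
          (((-1 : ℤ) ^ (k + l) * n.choose k * m.choose l * (k + l).choose k : ℤ) : ℝ) := by
    push_cast; rfl
  rw [← hcast, lag_aux_C n m]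
  split <;> simp
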